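/- Let A, B, C be noncollinear points in ℝ² and let P be a point in the interior of the convex hull of {A, B, C}. Let D be the intersection point of the lines BP and AC, and let F be the intersection point of the lines CP and AB. Then the area of the triangle with vertices P, D, F is strictly less than the area of the triangle with vertices A, D, F. -/

import Mathlib

open Set MeasureTheory

noncomputable section

/-- The line through two points in the plane `ℝ × ℝ`. -/
def line (a b : ℝ × ℝ) : AffineSubspace ℝ (ℝ × ℝ) := affineSpan ℝ {a, b}

open Pointwise

lemma coord_rel (f : (ℝ × ℝ) →ᵃ[ℝ] ℝ) {X Y Z : ℝ × ℝ} {t : ℝ} (h : t • (Z - Y) = X - Y) :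
    f X - f Y = t * (f Z - f Y) := by
  have h2 := congrArg f.linear h
  rw [_root_.map_smul] at h2
  have e1 : f.linear (Z - Y) = f Z - f Y := f.linearMap_vsub Z Y
  have e2 : f.linear (X - Y) = f X - f Y := f.linearMap_vsub X Y
  rw [e1, e2] at h2
  simpa using h2.symm

lemma tri_scale (X Y Z X' : ℝ × ℝ) (h : LinearIndependent ℝ ![X - Y, Z - Y]) (c d : ℝ)
    (h' : X' = Y + c • (X - Y) + d • (Z - Y)) :
    volume (convexHull ℝ ({X', Y, Z} : Set (ℝ × ℝ))) =
      ENNReal.ofReal |c| * volume (convexHull ℝ ({X, Y, Z} : Set (ℝ × ℝ))) := by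
  have hcard : Fintype.card (Fin 2) = Module.finrank ℝ (ℝ × ℝ) := by simp
  let bb : Module.Basis (Fin 2) ℝ (ℝ × ℝ) := basisOfLinearIndependentOfCardEqFinrank h hcard
  have hbb : ⇑bb = ![X - Y, Z - Y] := coe_basisOfLinearIndependentOfCardEqFinrank h hcard
  have hbb0 : bb 0 = X - Y := by rw [hbb]; rfl
  have hbb1 : bb 1 = Z - Y := by rw [hbb]; rfl
  let M : (ℝ × ℝ) →ₗ[ℝ] (ℝ × ℝ) := bb.constr ℝ ![c • (X - Y) + d • (Z - Y), Z - Y]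
  have hM0 : M (X - Y) = c • (X - Y) + d • (Z - Y) := by
    have := bb.constr_basis ℝ ![c • (X - Y) + d • (Z - Y), Z - Y] 0
    rw [hbb0] at this; exact this
  have hM1 : M (Z - Y) = Z - Y := by
    have := bb.constr_basis ℝ ![c • (X - Y) + d • (Z - Y), Z - Y] 1
    rw [hbb1] at this; exact this
  have hMb0 : M (bb 0) = c • bb 0 + d • bb 1 := by rw [hbb0, hbb1]; exact hM0
  have hMb1 : M (bb 1) = bb 1 := by rw [hbb1]; exact hM1
  have hdet : LinearMap.det M = c := by
    rw [← LinearMap.det_toMatrix bb]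
    have hmat : LinearMap.toMatrix bb bb M = !![c, 0; d, 1] := by
      ext i j
      rw [LinearMap.toMatrix_apply]
      fin_cases i <;> fin_cases j <;>
        simp [hMb0, hMb1, map_add, Module.Basis.repr_self, Finsupp.single_apply]
    rw [hmat, Matrix.det_fin_two_of]; ring
  have himg : convexHull ℝ ({X', Y, Z} : Set (ℝ × ℝ)) =
      Y +ᵥ (M '' ((-Y) +ᵥ convexHull ℝ ({X, Y, Z} : Set (ℝ × ℝ)))) := by
    rw [← convexHull_vadd, M.image_convexHull, ← convexHull_vadd]
    congr 1
    have hset : (-Y) +ᵥ ({X, Y, Z} : Set (ℝ × ℝ)) = {X - Y, 0, Z - Y} := by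
      simp only [vadd_set_insert, vadd_set_singleton, vadd_eq_add]
      norm_num [neg_add_eq_sub]
    rw [hset]
    simp only [Set.image_insert_eq, Set.image_singleton, hM0, hM1, map_zero]
    simp only [vadd_set_insert, vadd_set_singleton, vadd_eq_add]
    rw [h']
    rw [add_assoc, add_zero, add_sub_cancel]
  rw [himg, measure_vadd, Measure.addHaar_image_linearMap, hdet, measure_vadd]

/-- Let `P` lie strictly inside the triangle with noncollinear vertices `A, B, C`, let `D`
be the intersection of the lines `BP` and `AC`, and let `F` be the intersection of the lines
`CP` and `AB`.  Then the area of triangle `PDF` is strictly less than that of triangle `ADF`. -/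
theorem area_PDF_lt_area_ADF (A B C P D F : ℝ × ℝ)
    (hABC : ¬ Collinear ℝ ({A, B, C} : Set (ℝ × ℝ)))
    (hP : P ∈ interior (convexHull ℝ ({A, B, C} : Set (ℝ × ℝ))))
    (hD₁ : D ∈ line B P) (hD₂ : D ∈ line A C)
    (hF₁ : F ∈ line C P) (hF₂ : F ∈ line A B) :
    volume (convexHull ℝ ({P, D, F} : Set (ℝ × ℝ))) <
      volume (convexHull ℝ ({A, D, F} : Set (ℝ × ℝ))) := by
  have hai : AffineIndependent ℝ ![A, B, C] := affineIndependent_iff_not_collinear_set.2 hABC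
  have htop : affineSpan ℝ (Set.range ![A, B, C]) = ⊤ :=
    hai.affineSpan_eq_top_iff_card_eq_finrank_add_one.mpr (by simp)
  let b : AffineBasis (Fin 3) ℝ (ℝ × ℝ) := ⟨![A, B, C], hai, htop⟩
  have hb0 : b 0 = A := rfl
  have hb1 : b 1 = B := rfl
  have hb2 : b 2 = C := rfl
  have hrange : Set.range ⇑b = ({A, B, C} : Set (ℝ × ℝ)) := by
    show Set.range ![A, B, C] = _
    simp [Matrix.range_cons, Matrix.range_empty]
    ext x; simp only [Set.mem_insert_iff, Set.mem_singleton_iff]; tauto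
  set α := b.coord 0 P with hα_def
  set β := b.coord 1 P with hβ_def
  set γ := b.coord 2 P with hγ_def
  have hpos : ∀ i, 0 < b.coord i P := by
    rw [← hrange] at hP
    rw [b.interior_convexHull] at hP
    exact hP
  have hα : 0 < α := hpos 0
  have hβ : 0 < β := hpos 1
  have hγ : 0 < γ := hpos 2
  have hsum : α + β + γ = 1 := by
    have := b.sum_coord_apply_eq_one P
    rwa [Fin.sum_univ_three] at this
  -- parameters for D and F
  obtain ⟨t, ht⟩ : ∃ r : ℝ, r • (P -ᵥ B) = D -ᵥ B := by
    rw [← vadd_left_mem_affineSpan_pair]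
    simpa [line] using hD₁
  obtain ⟨r, hr⟩ : ∃ r : ℝ, r • (C -ᵥ A) = D -ᵥ A := by
    rw [← vadd_left_mem_affineSpan_pair]
    simpa [line] using hD₂
  obtain ⟨s, hs⟩ : ∃ r : ℝ, r • (P -ᵥ C) = F -ᵥ C := by
    rw [← vadd_left_mem_affineSpan_pair]
    simpa [line] using hF₁
  obtain ⟨w, hw⟩ : ∃ r : ℝ, r • (B -ᵥ A) = F -ᵥ A := by
    rw [← vadd_left_mem_affineSpan_pair]
    simpa [line] using hF₂
  rw [vsub_eq_sub, vsub_eq_sub] at ht hr hs hw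
  -- coordinates of D
  have cBA : b.coord 1 A = 0 := by rw [← hb0, b.coord_apply]; simp [Fin.ext_iff]
  have cBB : b.coord 1 B = 1 := by rw [← hb1, b.coord_apply]; simp [Fin.ext_iff]
  have cBC : b.coord 1 C = 0 := by rw [← hb2, b.coord_apply]; simp [Fin.ext_iff]
  have cCA : b.coord 2 A = 0 := by rw [← hb0, b.coord_apply]; simp [Fin.ext_iff]
  have cCB : b.coord 2 B = 0 := by rw [← hb1, b.coord_apply]; simp [Fin.ext_iff]
  have cCC : b.coord 2 C = 1 := by rw [← hb2, b.coord_apply]; simp [Fin.ext_iff]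
  have hDB : b.coord 1 D = 0 := by
    have := coord_rel (b.coord 1) hr
    rw [cBA, cBC] at this; simpa using this
  have ht1 : t * (α + γ) = 1 := by
    have := coord_rel (b.coord 1) ht
    rw [cBB, hDB, ← hβ_def] at this
    have hβ1 : β - 1 = -(α + γ) := by linarith
    rw [hβ1] at this
    linarith [this]
  have hDC : b.coord 2 D = t * γ := by
    have := coord_rel (b.coord 2) ht
    rw [cCB, ← hγ_def] at this; simpa using this
  have hFC : b.coord 2 F = 0 := by
    have := coord_rel (b.coord 2) hw
    rw [cCA, cCB] at this; simpa using this
  have hs1 : s * (α + β) = 1 := by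
    have := coord_rel (b.coord 2) hs
    rw [cCC, hFC, ← hγ_def] at this
    have hγ1 : γ - 1 = -(α + β) := by linarith
    rw [hγ1] at this
    linarith [this]
  have hFB : b.coord 1 F = s * β := by
    have := coord_rel (b.coord 1) hs
    rw [cBC, ← hβ_def] at this; simpa using this
  have htne : t ≠ 0 := fun h0 => by simp [h0] at ht1
  have hsne : s ≠ 0 := fun h0 => by simp [h0] at hs1
  -- linear independence of A - D, F - D
  have hli : LinearIndependent ℝ ![A - D, F - D] := by
    rw [LinearIndependent.pair_iff]
    intro s₀ t₀ h0
    have h1 := congrArg (b.coord 1).linear h0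
    have h2 := congrArg (b.coord 2).linear h0
    simp only [map_add, _root_.map_smul, map_zero] at h1 h2
    have lv : ∀ (f : (ℝ × ℝ) →ᵃ[ℝ] ℝ) (X Y : ℝ × ℝ), f.linear (X - Y) = f X - f Y :=
      fun f X Y => f.linearMap_vsub X Y
    rw [lv, lv] at h1
    rw [lv, lv] at h2
    rw [cBA, hDB, hFB] at h1
    rw [cCA, hDC, hFC] at h2
    simp only [vsub_eq_sub, smul_eq_mul] at h1 h2
    have ht₀ : t₀ = 0 := by
      have : t₀ * (s * β) = 0 := by linarith
      rcases mul_eq_zero.1 this with h | h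
      · exact h
      · exact absurd h (by positivity)
    have hs₀ : s₀ = 0 := by
      rw [ht₀] at h2
      have : s₀ * (t * γ) = 0 := by linarith
      rcases mul_eq_zero.1 this with h | h
      · exact h
      · exact absurd h (mul_ne_zero htne (ne_of_gt hγ))
    exact ⟨hs₀, ht₀⟩
  -- P as combination
  have hPcomb : P = α • A + β • B + γ • C := by
    have h1 := b.affineCombination_coord_eq_self P
    rw [Finset.univ.affineCombination_eq_linear_combination _ _ (b.sum_coord_apply_eq_one P)] at h1
    rw [Fin.sum_univ_three] at h1
    rw [← h1]; rfl
  -- the key identity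
  have hkey : P = D + (-α) • (A - D) + (α + β) • (F - D) := by
    have hD : D = t • (P - B) + B := by rw [ht]; abel
    have hF : F = s • (P - C) + C := by rw [hs]; abel
    rw [hD, hF, hPcomb]
    match_scalars
    · linear_combination (-α) * ht1 + (-α) * hs1 + (t * α) * hsum
    · linear_combination (1 - β) * ht1 + (-β) * hs1 + (-(1 - β) * t) * hsum
    · linear_combination (-γ) * ht1 + (α + β) * hs1 + (t * γ - s * (α + β)) * hsum
  -- not collinear A D F
  have hncol : ¬ Collinear ℝ ({A, D, F} : Set (ℝ × ℝ)) := by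
    intro hcol
    rw [collinear_iff_of_mem (Set.mem_insert_of_mem _ (Set.mem_insert _ _))] at hcol
    obtain ⟨vv, hv⟩ := hcol
    obtain ⟨r₁, hr₁⟩ := hv A (Set.mem_insert _ _)
    obtain ⟨r₂, hr₂⟩ := hv F (by simp)
    have e1 : A - D = r₁ • vv := by rw [hr₁]; simp [vadd_eq_add]
    have e2 : F - D = r₂ • vv := by rw [hr₂]; simp [vadd_eq_add]
    have := (LinearIndependent.pair_iff.1 hli) r₂ (-r₁) (by
      rw [e1, e2, smul_smul, smul_smul]; module)
    have hr₁0 : r₁ = 0 := by have := this.2; simpa using this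
    have hA : A - D = 0 := by rw [e1, hr₁0, zero_smul]
    exact hli.ne_zero 0 (by simpa using hA)
  have hai2 : AffineIndependent ℝ ![A, D, F] := affineIndependent_iff_not_collinear_set.2 hncol
  have htop2 : affineSpan ℝ (Set.range ![A, D, F]) = ⊤ :=
    hai2.affineSpan_eq_top_iff_card_eq_finrank_add_one.mpr (by simp)
  have hrange2 : Set.range ![A, D, F] = ({A, D, F} : Set (ℝ × ℝ)) := by
    ext x; simp [Matrix.range_cons, Matrix.range_empty]; tauto
  rw [hrange2] at htop2
  have hint : (interior (convexHull ℝ ({A, D, F} : Set (ℝ × ℝ)))).Nonempty :=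
    interior_convexHull_nonempty_iff_affineSpan_eq_top.2 htop2
  have hposvol : 0 < volume (convexHull ℝ ({A, D, F} : Set (ℝ × ℝ))) := by
    obtain ⟨x, hx⟩ := hint
    exact Measure.measure_pos_of_nonempty_interior _ ⟨x, hx⟩
  have hfin : volume (convexHull ℝ ({A, D, F} : Set (ℝ × ℝ))) < ⊤ :=
    ((Set.finite_singleton F).insert D |>.insert A).isCompact_convexHull (𝕜 := ℝ) |>.measure_lt_top
  have hvol := tri_scale A D F P hli (-α) (α + β) hkey
  rw [hvol, abs_neg, abs_of_pos hα]
  calc ENNReal.ofReal α * volume (convexHull ℝ ({A, D, F} : Set (ℝ × ℝ)))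
      < 1 * volume (convexHull ℝ ({A, D, F} : Set (ℝ × ℝ))) := by
        rw [ENNReal.mul_lt_mul_iff_left (ne_of_gt hposvol) (ne_of_lt hfin)]
        rw [← ENNReal.ofReal_one]
        exact ENNReal.ofReal_lt_ofReal_iff_of_nonneg (le_of_lt hα) |>.2 (by linarith)
    _ = _ := one_mul _
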